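/- Let 0 < k < 1, λ = √(1−k), and let f : [0,∞) → (0,∞) satisfy f^{(j+2)} = f^{(j)}·(1−k) + Σ_{i=0}^{j} ε_i·f^{(i)} for all j ≥ 0, where each ε_i(t) → 0 as t → ∞, and suppose that for some δ ∈ (0,λ) and T, B > A > 0 one has A·e^{−(λ+δ)t} ≤ f(t), −f'(t) ≤ B·e^{−(λ−δ)t} for t > T. Then for every integer m ≥ 2 there exist constants B_m > A_m > 0 and T_m such that A_m·e^{−(λ+δ)t} ≤ (−1)^m·f^{(m)}(t) ≤ B_m·e^{−(λ−δ)t} for all t > T_m. -/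

import Mathlib

open Real Filter Topology

lemma barrier_nonneg {g g' : ℝ → ℝ} {t₀ : ℝ}
    (hg : ∀ t, t₀ ≤ t → HasDerivAt g (g' t) t)
    (h0 : 0 ≤ g t₀)
    (hpos : ∀ t, t₀ ≤ t → g t = 0 → 0 < g' t) :
    ∀ t, t₀ ≤ t → 0 ≤ g t := by
  intro t₂ ht₂
  by_contra hneg
  push_neg at hneg
  have hcont : ContinuousOn g (Set.Icc t₀ t₂) := fun x hx =>
    ((hg x hx.1).continuousAt).continuousWithinAt
  set S : Set ℝ := Set.Icc t₀ t₂ ∩ g ⁻¹' (Set.Ici 0) with hS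
  have hSne : S.Nonempty := ⟨t₀, ⟨le_refl _, ht₂⟩, h0⟩
  have hSbdd : BddAbove S := ⟨t₂, fun x hx => hx.1.2⟩
  have hSclosed : IsClosed S :=
    hcont.preimage_isClosed_of_isClosed isClosed_Icc isClosed_Ici
  set s := sSup S with hs
  have hsmem : s ∈ S := hSclosed.csSup_mem hSne hSbdd
  have hst₀ : t₀ ≤ s := hsmem.1.1
  have hst₂ : s ≤ t₂ := hsmem.1.2
  have hgs : 0 ≤ g s := hsmem.2
  have hslt : s < t₂ := by
    rcases lt_or_eq_of_le hst₂ with h | h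
    · exact h
    · exact absurd (h ▸ hgs) (not_le.2 hneg)
  have hneg' : ∀ x, s < x → x ≤ t₂ → g x < 0 := by
    intro x hx1 hx2
    by_contra hge
    push_neg at hge
    have hxS : x ∈ S := ⟨⟨hst₀.trans hx1.le, hx2⟩, hge⟩
    exact absurd (le_csSup hSbdd hxS) (not_le.2 hx1)
  have hgs0 : g s = 0 := by
    refine le_antisymm ?_ hgs
    have hc : Tendsto g (𝓝[>] s) (𝓝 (g s)) :=
      ((hg s hst₀).continuousAt.continuousWithinAt)
    refine le_of_tendsto hc ?_
    filter_upwards [Ioo_mem_nhdsGT hslt] with x hx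
    exact (hneg' x hx.1 hx.2.le).le
  have hds : 0 < g' s := hpos s hst₀ hgs0
  have h1 : Tendsto (slope g s) (𝓝[>] s) (𝓝 (g' s)) := by
    have h2 := (hg s hst₀).hasDerivWithinAt (s := Set.Ioi s)
    have h3 := hasDerivWithinAt_iff_tendsto_slope.mp h2
    rwa [Set.diff_singleton_eq_self (by simp)] at h3
  have hev : ∀ᶠ x in 𝓝[>] s, 0 < slope g s x := h1.eventually (eventually_gt_nhds hds)
  obtain ⟨x, hx1, hx2⟩ := (hev.and (Ioo_mem_nhdsGT hslt)).exists
  have : 0 < g x := by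
    have hxs : 0 < x - s := by linarith [hx2.1]
    have := hx1
    rw [slope_def_field, div_pos_iff] at this
    rcases this with ⟨h, _⟩ | ⟨_, h⟩
    · rw [hgs0] at h; linarith
    · linarith
  exact absurd this (not_lt.2 (hneg' x hx2.1 hx2.2.le).le)

lemma deriv_linear_lower {g g' : ℝ → ℝ} {t₀ c : ℝ}
    (hg : ∀ t, t₀ ≤ t → HasDerivAt g (g' t) t)
    (hc : ∀ t, t₀ ≤ t → c ≤ g' t) :
    ∀ t, t₀ ≤ t → g t₀ + c * (t - t₀) ≤ g t := by
  have hG : ∀ t, t₀ ≤ t → HasDerivAt (fun y => g y - c * y) (g' t - c) t := by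
    intro t ht
    have := (hg t ht).sub ((hasDerivAt_id t).const_mul c)
    rw [mul_one] at this
    exact this
  have key : MonotoneOn (fun y => g y - c * y) (Set.Ici t₀) := by
    apply monotoneOn_of_deriv_nonneg (convex_Ici t₀)
    · exact fun x hx => ((hG x hx).continuousAt).continuousWithinAt
    · intro x hx
      rw [interior_Ici] at hx
      exact (hG x hx.le).differentiableAt.differentiableWithinAt
    · intro x hx
      rw [interior_Ici] at hx
      rw [(hG x hx.le).deriv]
      linarith [hc x hx.le]
  intro t ht
  have := key (Set.self_mem_Ici) ht ht
  simp only at this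
  linarith

set_option maxHeartbeats 1000000 in
theorem higher_derivatives_decay_exponentially
    (k lam δ T A B : ℝ) (hk : 0 < k) (hk1 : k < 1)
    (hlam : lam = Real.sqrt (1 - k)) (hδ : δ ∈ Set.Ioo 0 lam)
    (hA : 0 < A) (hAB : A < B)
    (f : ℝ → ℝ) (eps : ℕ → ℝ → ℝ)
    (hf : ∀ n : ℕ, ContDiff ℝ n f) (hpos : ∀ t ≥ (0:ℝ), 0 < f t)
    (hrec : ∀ (j : ℕ), ∀ t ≥ (0:ℝ), iteratedDeriv (j + 2) f t
      = iteratedDeriv j f t * (1 - k)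
        + ∑ i ∈ Finset.range (j + 1), eps i t * iteratedDeriv i f t)
    (heps : ∀ i, Tendsto (eps i) atTop (nhds 0))
    (hdecay : ∀ t > T,
      (A * Real.exp (-(lam + δ) * t) ≤ f t ∧ f t ≤ B * Real.exp (-(lam - δ) * t)) ∧
      (A * Real.exp (-(lam + δ) * t) ≤ -deriv f t ∧
        -deriv f t ≤ B * Real.exp (-(lam - δ) * t))) :
    ∀ m : ℕ, 2 ≤ m → ∃ Tm Am Bm : ℝ, 0 < Am ∧ Am < Bm ∧ ∀ t > Tm,
      Am * Real.exp (-(lam + δ) * t) ≤ (-1) ^ m * iteratedDeriv m f t ∧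
      (-1) ^ m * iteratedDeriv m f t ≤ Bm * Real.exp (-(lam - δ) * t) := by
  obtain ⟨hδ0, hδlam⟩ := hδ
  have hk' : (0:ℝ) < 1 - k := by linarith
  have hlam0 : 0 < lam := hlam ▸ Real.sqrt_pos.mpr hk'
  have hlamsq : lam ^ 2 = 1 - k := by rw [hlam, sq_sqrt hk'.le]
  have hmax0 : (0:ℝ) ≤ max T 0 := le_max_right T 0
  have hfd : ∀ n : ℕ, Differentiable ℝ (iteratedDeriv n f) := fun n =>
    (hf (n+1)).differentiable_iteratedDeriv n (by exact_mod_cast Nat.lt_succ_self n)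
  have hf1 : ∀ t : ℝ, HasDerivAt f (deriv f t) t := fun t =>
    (((hf 1).differentiable (by norm_num)) t).hasDerivAt
  set u : ℝ → ℝ := fun t => -(deriv f t / f t) with hu_def
  have hf2 : ∀ t, 0 ≤ t → iteratedDeriv 2 f t = (1 - k + eps 0 t) * f t := by
    intro t ht
    have h := hrec 0 t ht
    norm_num [Finset.sum_range_one] at h
    rw [h]; ring
  have hu' : ∀ t, 0 ≤ t → HasDerivAt u (u t ^ 2 - (1 - k) - eps 0 t) t := by
    intro t ht
    have hft : f t ≠ 0 := (hpos t ht).ne'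
    have h2 : HasDerivAt (deriv f) (iteratedDeriv 2 f t) t := by
      have h3 := ((hfd 1) t).hasDerivAt
      rw [show iteratedDeriv 1 f = deriv f from iteratedDeriv_one] at h3
      have e2 : iteratedDeriv 2 f = deriv (deriv f) := by
        rw [show (2:ℕ) = 1 + 1 from rfl, iteratedDeriv_succ, iteratedDeriv_one]
      rw [e2]
      exact h3
    have h4 := (h2.div (hf1 t) hft).neg
    refine h4.congr_deriv ?_
    rw [hf2 t ht]
    simp only [hu_def]
    field_simp
    ring
  have hupos : ∀ t, max T 0 < t → 0 < u t := by
    intro t ht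
    have htT : T < t := lt_of_le_of_lt (le_max_left T 0) ht
    have ht0 : (0:ℝ) ≤ t := le_of_lt (lt_of_le_of_lt (le_max_right T 0) ht)
    obtain ⟨_, hd1, _⟩ := hdecay t htT
    have h1 : 0 < -deriv f t := lt_of_lt_of_le (by positivity) hd1
    have h2 : 0 < f t := hpos t ht0
    have h3 : u t = (-deriv f t) / f t := by simp [hu_def, neg_div]
    rw [h3]; exact div_pos h1 h2
  have hepsT : ∀ η : ℝ, 0 < η → ∃ T₁ : ℝ, max T 0 + 1 ≤ T₁ ∧
      ∀ t, T₁ ≤ t → |eps 0 t| ≤ lam * η / 2 := by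
    intro η hη
    obtain ⟨N, hN⟩ := Metric.tendsto_atTop.mp (heps 0) (lam * η / 2) (by positivity)
    refine ⟨max N (max T 0 + 1), le_max_right _ _, fun t ht => ?_⟩
    have := hN t (le_trans (le_max_left _ _) ht)
    rw [Real.dist_eq, sub_zero] at this
    exact this.le
  -- upper barrier
  have hupper : ∀ η : ℝ, 0 < η → η < lam → ∀ᶠ t in atTop, u t < lam + η := by
    intro η hη hηlam
    obtain ⟨T₁, hT₁ge, hT₁⟩ := hepsT η hη
    rw [eventually_atTop]
    refine ⟨T₁, fun t₀ ht₀ => ?_⟩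
    by_contra hcon
    push_neg at hcon
    have ht₀0 : (0:ℝ) ≤ t₀ := by linarith
    have hbar : ∀ t, t₀ ≤ t → 0 ≤ u t - (lam + η) := by
      apply barrier_nonneg (g' := fun t => u t ^ 2 - (1-k) - eps 0 t)
      · intro t ht
        exact ((hu' t (by linarith)).sub_const _)
      · linarith
      · intro t ht h0
        have hut : u t = lam + η := by linarith
        have hε := abs_le.mp (hT₁ t (by linarith))
        rw [hut]
        nlinarith [hε.1, hε.2]
    have hc : ∀ t, t₀ ≤ t → lam*η ≤ u t ^ 2 - (1-k) - eps 0 t := by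
      intro t ht
      have h1 := hbar t ht
      have hε := abs_le.mp (hT₁ t (by linarith))
      nlinarith [sq_nonneg (u t - (lam + η)),
        mul_nonneg (show (0:ℝ) ≤ lam + η by positivity) h1, hε.1, hε.2]
    have hgrow : ∀ t, t₀ ≤ t → u t₀ + (lam*η) * (t - t₀) ≤ u t :=
      deriv_linear_lower (fun t ht => hu' t (by linarith)) hc
    set t₃ := t₀ + (δ + 1)/(lam*η) with ht₃def
    have ht₀t₃ : t₀ ≤ t₃ := by
      have h5 : 0 ≤ (δ+1)/(lam*η) := by positivity
      rw [ht₃def]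
      linarith
    have hub : ∀ t, t₃ ≤ t → lam + δ + 1 ≤ u t := by
      intro t ht
      have h1 := hgrow t (le_trans ht₀t₃ ht)
      have h2 : (δ+1) ≤ lam*η*(t - t₀) := by
        rw [show (δ+1 : ℝ) = lam*η*((δ+1)/(lam*η)) by field_simp]
        apply mul_le_mul_of_nonneg_left _ (by positivity)
        simp only [ht₃def] at ht
        linarith
      linarith
    set μ := lam + δ + 1 with hμdef
    set C := f t₃ * Real.exp (μ * t₃) with hCdef
    have hg : ∀ t, t₃ ≤ t → HasDerivAt (fun y => -(f y * Real.exp (μ * y)))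
        (-(deriv f t * Real.exp (μ*t) + f t * (Real.exp (μ*t) * μ))) t := by
      intro t ht
      have h2 : HasDerivAt (fun y => Real.exp (μ * y)) (Real.exp (μ * t) * μ) t := by
        have := ((hasDerivAt_id t).const_mul μ).exp
        simpa using this
      exact ((hf1 t).mul h2).neg
    have h0' : ∀ t, t₃ ≤ t → (0:ℝ) ≤ -(deriv f t * Real.exp (μ*t) + f t * (Real.exp (μ*t) * μ)) := by
      intro t ht
      have htt0 : (0:ℝ) ≤ t := by linarith
      have hft : 0 < f t := hpos t htt0
      have huu := hub t ht
      have h5 : u t * f t = -deriv f t := by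
        simp only [hu_def]
        field_simp
      have h6 : μ * f t ≤ -deriv f t := by
        rw [← h5]
        exact mul_le_mul_of_nonneg_right huu hft.le
      have h7 : (0:ℝ) ≤ (-deriv f t - μ * f t) * Real.exp (μ*t) :=
        mul_nonneg (by linarith) (exp_pos _).le
      nlinarith [h7]
    have hanti : ∀ t, t₃ ≤ t → f t * Real.exp (μ * t) ≤ C := by
      intro t ht
      have := deriv_linear_lower (c := 0) hg h0' t ht
      simp only [zero_mul, add_zero] at this
      linarith
    have hflt : Tendsto (fun t : ℝ => A * Real.exp t) atTop atTop :=
      tendsto_exp_atTop.const_mul_atTop hA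
    obtain ⟨t, htC, ht₃le, htmax⟩ : ∃ t, C < A * Real.exp t ∧ t₃ ≤ t ∧ max T 0 < t := by
      obtain ⟨t, h⟩ := ((hflt.eventually_gt_atTop C).and
        ((eventually_ge_atTop t₃).and (eventually_gt_atTop (max T 0)))).exists
      exact ⟨t, h.1, h.2.1, h.2.2⟩
    have hA1 := ((hdecay t (lt_of_le_of_lt (le_max_left T 0) htmax)).1).1
    have h7 := hanti t ht₃le
    have h8 : A * Real.exp (-(lam+δ)*t) * Real.exp (μ * t) ≤ f t * Real.exp (μ * t) :=
      mul_le_mul_of_nonneg_right hA1 (exp_pos _).le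
    have h9 : A * Real.exp (-(lam+δ)*t) * Real.exp (μ * t) = A * Real.exp t := by
      rw [mul_assoc, ← Real.exp_add]
      congr 2
      rw [hμdef]; ring
    linarith
  -- lower barrier
  have hlower : ∀ η : ℝ, 0 < η → η < lam → ∀ᶠ t in atTop, lam - η < u t := by
    intro η hη hηlam
    obtain ⟨T₁, hT₁ge, hT₁⟩ := hepsT η hη
    rw [eventually_atTop]
    refine ⟨T₁, fun t₀ ht₀ => ?_⟩
    by_contra hcon
    push_neg at hcon
    have hmaxlt : max T 0 < t₀ := by linarith
    have ht₀0 : (0:ℝ) ≤ t₀ := by linarith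
    have hbar : ∀ t, t₀ ≤ t → 0 ≤ (lam - η) - u t := by
      apply barrier_nonneg (g' := fun t => -(u t ^ 2 - (1-k) - eps 0 t))
      · intro t ht
        exact ((hu' t (by linarith)).const_sub _)
      · linarith
      · intro t ht h0
        have hut : u t = lam - η := by linarith
        have hε := abs_le.mp (hT₁ t (by linarith))
        rw [hut]
        nlinarith [hε.1, hε.2]
    have hcderiv : ∀ t, t₀ ≤ t → lam*η/2 ≤ -(u t ^ 2 - (1-k) - eps 0 t) := by
      intro t ht
      have h1 := hbar t ht
      have h2 : 0 < u t := hupos t (lt_of_lt_of_le hmaxlt ht)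
      have hε := abs_le.mp (hT₁ t (by linarith))
      have key : ∀ v e : ℝ, 0 ≤ lam - η - v → 0 < v → -(lam*η/2) ≤ e → e ≤ lam*η/2 →
          lam*η/2 ≤ -(v^2 - (1-k) - e) := by
        intro v e q1 q2 q3 q4
        nlinarith [mul_pos hη (show (0:ℝ) < lam - η by linarith),
          mul_le_mul (show v ≤ lam - η by linarith) (show v ≤ lam - η by linarith)
            q2.le (show (0:ℝ) ≤ lam - η by linarith)]
      exact key (u t) (eps 0 t) h1 h2 hε.1 hε.2
    have hgrow : ∀ t, t₀ ≤ t → -u t₀ + (lam*η/2)*(t-t₀) ≤ -u t := by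
      apply deriv_linear_lower (g' := fun t => -(u t ^ 2 - (1-k) - eps 0 t))
      · intro t ht; exact (hu' t (by linarith)).neg
      · exact hcderiv
    have hu₀ : 0 < u t₀ := hupos t₀ hmaxlt
    set t₄ := t₀ + (2*u t₀ + 2)/(lam*η) with ht₄def
    clear_value t₄
    have ht₄ : t₀ ≤ t₄ := by
      have h5 : 0 ≤ (2*u t₀+2)/(lam*η) := by positivity
      rw [ht₄def]
      linarith
    have h9 := hgrow t₄ ht₄
    have h10 : 0 < u t₄ := hupos t₄ (lt_of_lt_of_le hmaxlt ht₄)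
    have h11 : lam*η/2*(t₄ - t₀) = u t₀ + 1 := by
      rw [ht₄def]
      field_simp
      ring
    have key2 : ∀ a b c : ℝ, -a + c ≤ -b → 0 < b → c = a + 1 → False := by
      intro a b c q1 q2 q3; linarith
    exact key2 (u t₀) (u t₄) (lam*η/2*(t₄ - t₀)) h9 h10 h11
  -- u tends to lam
  have hulim : Tendsto u atTop (𝓝 lam) := by
    rw [Metric.tendsto_atTop]
    intro ε hε
    set η := min (ε/2) (lam/2) with hη_def
    have hη0 : 0 < η := lt_min (by positivity) (by positivity)
    have hηlam : η < lam := lt_of_le_of_lt (min_le_right _ _) (by linarith)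
    have hηε : η < ε := lt_of_le_of_lt (min_le_left _ _) (by linarith)
    obtain ⟨N, hN⟩ := eventually_atTop.1 ((hupper η hη0 hηlam).and (hlower η hη0 hηlam))
    refine ⟨N, fun t ht => ?_⟩
    obtain ⟨h1, h2⟩ := hN t ht
    rw [Real.dist_eq, abs_sub_lt_iff]
    constructor <;> linarith
  -- ratios of derivatives converge
  have hr : ∀ m : ℕ, Tendsto (fun t => iteratedDeriv m f t / f t) atTop (𝓝 ((-lam)^m)) := by
    intro m
    induction m using Nat.strong_induction_on with
    | _ m ih =>
      match m, ih with
      | 0, _ =>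
        simp only [iteratedDeriv_zero, pow_zero]
        apply Tendsto.congr' ?_ (tendsto_const_nhds (x := (1:ℝ)))
        filter_upwards [eventually_ge_atTop (0:ℝ)] with t ht
        rw [div_self (hpos t ht).ne']
      | 1, _ =>
        have h : (fun t => iteratedDeriv 1 f t / f t) = fun t => -u t := by
          funext t; simp [hu_def, iteratedDeriv_one]
        rw [h, pow_one]
        exact hulim.neg
      | (j+2), ih =>
        have hmain := ((ih j (by omega)).mul_const (1-k)).add
          (tendsto_finset_sum (Finset.range (j+1))
            (fun i hi => ((heps i).mul (ih i (by have := Finset.mem_range.mp hi; omega)))))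
        have hval : ((-lam)^j * (1-k) + ∑ i ∈ Finset.range (j+1), (0:ℝ) * (-lam)^i)
            = (-lam)^(j+2) := by
          simp only [zero_mul, Finset.sum_const_zero, add_zero]
          rw [pow_add, show ((-lam):ℝ)^2 = lam^2 by ring, hlamsq]
        rw [hval] at hmain
        apply Tendsto.congr' ?_ hmain
        filter_upwards [eventually_ge_atTop (0:ℝ)] with t ht
        rw [hrec j t ht, add_div, Finset.sum_div, mul_div_right_comm]
        congr 1
        exact Finset.sum_congr rfl fun i _ => (mul_div_assoc _ _ _).symm
  -- conclusion
  intro m _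
  have hs : Tendsto (fun t => (-1:ℝ)^m * (iteratedDeriv m f t / f t)) atTop (𝓝 (lam^m)) := by
    have h := (hr m).const_mul ((-1:ℝ)^m)
    have h2 : ((-1:ℝ)^m * (-lam)^m) = lam^m := by
      rw [← mul_pow]; norm_num
    rwa [h2] at h
  have hL : 0 < lam^m := pow_pos hlam0 m
  have hev1 := Metric.tendsto_nhds.mp hs (lam^m/2) (by positivity)
  obtain ⟨Tm, hTm⟩ := eventually_atTop.1 (hev1.and (eventually_gt_atTop (max T 0)))
  refine ⟨Tm, lam^m/2 * A, 2*lam^m*B, by positivity, by nlinarith, ?_⟩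
  intro t ht
  obtain ⟨habs, htT⟩ := hTm t ht.le
  rw [Real.dist_eq, abs_sub_lt_iff] at habs
  have ht0 : (0:ℝ) ≤ t := le_of_lt (lt_of_le_of_lt (le_max_right T 0) htT)
  have htT' : T < t := lt_of_le_of_lt (le_max_left T 0) htT
  have hft : 0 < f t := hpos t ht0
  obtain ⟨⟨hfl, hfu⟩, _⟩ := hdecay t htT'
  have hrw : (-1:ℝ)^m * iteratedDeriv m f t
      = ((-1:ℝ)^m * (iteratedDeriv m f t / f t)) * f t := by
    field_simp
  have hs1 : lam^m/2 ≤ (-1:ℝ)^m * (iteratedDeriv m f t / f t) := by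
    linarith [habs.1, habs.2]
  have hs2 : (-1:ℝ)^m * (iteratedDeriv m f t / f t) ≤ 2*lam^m := by
    linarith [habs.1, habs.2]
  constructor
  · rw [hrw]
    have h12 := mul_le_mul hs1 hfl (by positivity) (by linarith)
    linarith [h12]
  · rw [hrw]
    have h12 := mul_le_mul hs2 hfu hft.le (by positivity)
    linarith [h12]
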